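/- arXiv:1209.2502 — 3 statements merged into one kernel-verified Lean document; each statement's English description precedes it below -/
import Mathlib

section
/- Let Ψ be a subset-generating function, let A_0,…,A_n ∈ 𝔍, and let α_0,…,α_n ∈ [0,1] and β_0,…,β_n ∈ [0,1] be two weight sequences with ∑_{i=0}^n α_i = ∑_{i=0}^n β_i = 1. Then the distance between the two partition averages is bounded by the doubly averaged pairwise distances: d_μ(⊗_{i=0}^n α_i A_i, ⊗_{i=0}^n β_i A_i) ≤ ∑_{i=0}^n ∑_{j=0}^n α_i β_j · d_μ(A_i, A_j). -/
open MeasureTheory Set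

noncomputable section

/-- Euclidean space ℝ^m. -/
abbrev Em (m : ℕ) : Type := EuclideanSpace ℝ (Fin m)

/-- A bounded set whose topological boundary has Lebesgue measure zero
(bounded Jordan measurable set). -/
def JordanMeas {m : ℕ} (A : Set (Em m)) : Prop :=
  Bornology.IsBounded A ∧ volume (frontier A) = 0

/-- A bounded set equal to the closure of its interior (regular compact set). -/
def RegCompact {m : ℕ} (A : Set (Em m)) : Prop :=
  Bornology.IsBounded A ∧ A = closure (interior A)

/-- Membership in the collection 𝔍 of regular compact Jordan measurable sets. -/
def MemJ {m : ℕ} (A : Set (Em m)) : Prop :=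
  RegCompact A ∧ JordanMeas A

/-- The partition element Ω_χ = (⋂_{k∈χ} A_k) \ (⋃_{l∉χ} A_l). -/
def partElem {m n : ℕ} (A : Fin (n+1) → Set (Em m)) (χ : Finset (Fin (n+1))) : Set (Em m) :=
  (⋂ k ∈ χ, A k) \ (⋃ l ∈ χᶜ, A l)

/-- A subset-generating function Ψ. -/
structure SubsetGen (m : ℕ) where
  Ψ : Set (Em m) → ℝ → Set (Em m)
  subset : ∀ A t, JordanMeas A → 0 ≤ t → t ≤ 1 → Ψ A t ⊆ A
  memJ : ∀ A t, JordanMeas A → 0 ≤ t → t ≤ 1 → MemJ (Ψ A t)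
  meas : ∀ A t, JordanMeas A → 0 ≤ t → t ≤ 1 →
    volume (Ψ A t) = ENNReal.ofReal t * volume A
  mono : ∀ A s t, JordanMeas A → 0 ≤ s → s ≤ t → t ≤ 1 → Ψ A s ⊆ Ψ A t

/-- The partition average ⊗_{i=0}^n α_i A_i = ⋃_{∅≠χ⊆{0,…,n}} Ψ(Ω_χ, ∑_{k∈χ} α_k). -/
def partAvg {m n : ℕ} (S : SubsetGen m) (α : Fin (n+1) → ℝ)
    (A : Fin (n+1) → Set (Em m)) : Set (Em m) :=
  ⋃ χ ∈ {χ : Finset (Fin (n+1)) | χ.Nonempty}, S.Ψ (partElem A χ) (∑ k ∈ χ, α k)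

/-- The symmetric difference (pseudo)metric d_μ(A,B) = μ(A Δ B). -/
def dmu {m : ℕ} (A B : Set (Em m)) : ℝ :=
  (volume ((A \ B) ∪ (B \ A))).toReal

/-- The Bernstein weight b(n,x;i) = C(n,i)·x^i·(1−x)^{n−i}. -/
def bern (n i : ℕ) (x : ℝ) : ℝ :=
  (n.choose i : ℝ) * x ^ i * (1 - x) ^ (n - i)

/-- The set-valued Bernstein operator B_n(F,x) = ⊗_{i=0}^n b(n,x;i)·F(i/n). -/
def setBern {m : ℕ} (S : SubsetGen m) (F : ℝ → Set (Em m)) (n : ℕ) (x : ℝ) : Set (Em m) :=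
  partAvg S (fun i : Fin (n+1) => bern n (i : ℕ) x)
    (fun i : Fin (n+1) => F ((i : ℕ) / n))


/- ### Auxiliary lemmas -/

lemma JordanMeas.nullMeas {m : ℕ} {A : Set (Em m)} (h : JordanMeas A) :
    NullMeasurableSet A (volume : Measure (Em m)) := by
  have h1 : interior A =ᵐ[(volume : Measure (Em m))] A := by
    rw [MeasureTheory.ae_eq_set]
    refine ⟨?_, ?_⟩
    · rw [diff_eq_empty.mpr interior_subset]; simp
    · refine measure_mono_null ?_ h.2
      intro x hx
      show x ∈ closure A \ interior A
      exact ⟨subset_closure hx.1, hx.2⟩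
  exact measurableSet_interior.nullMeasurableSet.congr h1

lemma JordanMeas.fin {m : ℕ} {A : Set (Em m)} (h : JordanMeas A) :
    volume A ≠ ⊤ := h.1.measure_lt_top.ne

lemma frontier_iInter_null {m : ℕ} {ι : Type*} [Finite ι] {B : ι → Set (Em m)}
    (h : ∀ i, volume (frontier (B i)) = 0) : volume (frontier (⋂ i, B i)) = 0 := by
  have hsub : frontier (⋂ i, B i) ⊆ ⋃ i, frontier (B i) := by
    intro x hx
    have hc : ∀ i, x ∈ closure (B i) := fun i =>
      closure_mono (iInter_subset B i) hx.1
    have hni : x ∉ ⋂ i, interior (B i) := fun hmem =>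
      hx.2 (interior_maximal (iInter_mono fun i => interior_subset)
        (isOpen_iInter_of_finite fun i => isOpen_interior) hmem)
    rw [mem_iInter] at hni
    push_neg at hni
    obtain ⟨i, hi⟩ := hni
    exact mem_iUnion.mpr ⟨i, hc i, hi⟩
  have := Finite.to_countable (α := ι)
  exact measure_mono_null hsub (measure_iUnion_null h)

lemma partElem_eq {m n : ℕ} (A : Fin (n+1) → Set (Em m)) (χ : Finset (Fin (n+1))) :
    partElem A χ = ⋂ i, (if i ∈ χ then A i else (A i)ᶜ) := by
  ext x
  simp only [partElem, mem_diff, mem_iInter₂, mem_iUnion₂, not_exists, mem_iInter,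
    Finset.mem_compl]
  constructor
  · rintro ⟨h1, h2⟩ i
    by_cases hi : i ∈ χ
    · simpa [hi] using h1 i hi
    · simpa [hi] using h2 i hi
  · intro h
    constructor
    · intro i hi; simpa [hi] using h i
    · intro i hi; simpa [hi] using h i

lemma partElem_disjoint {m n : ℕ} (A : Fin (n+1) → Set (Em m)) {χ χ' : Finset (Fin (n+1))}
    (h : χ ≠ χ') : Disjoint (partElem A χ) (partElem A χ') := by
  classical
  rw [Set.disjoint_left]
  intro x hx hx'
  rw [partElem_eq, mem_iInter] at hx hx'
  have : ∃ i, ¬ (i ∈ χ ↔ i ∈ χ') := by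
    by_contra hc
    push_neg at hc
    exact h (Finset.ext fun i => hc i)
  obtain ⟨i, hi⟩ := this
  have h1 := hx i
  have h2 := hx' i
  by_cases h3 : i ∈ χ <;> by_cases h4 : i ∈ χ' <;>
    simp [h3, h4] at h1 h2 hi <;> tauto

lemma partElem_subset_diff {m n : ℕ} (A : Fin (n+1) → Set (Em m)) {χ : Finset (Fin (n+1))}
    {i j : Fin (n+1)} (hi : i ∈ χ) (hj : j ∉ χ) : partElem A χ ⊆ A i \ A j := by
  rw [partElem_eq]
  intro x hx
  rw [mem_iInter] at hx
  have h1 := hx i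
  have h2 := hx j
  rw [if_pos hi] at h1
  rw [if_neg hj] at h2
  exact ⟨h1, h2⟩

lemma partElem_jordan {m n : ℕ} {A : Fin (n+1) → Set (Em m)} (hA : ∀ i, JordanMeas (A i))
    {χ : Finset (Fin (n+1))} (hχ : χ.Nonempty) : JordanMeas (partElem A χ) := by
  obtain ⟨k, hk⟩ := hχ
  constructor
  · exact (hA k).1.subset fun x hx => (mem_iInter₂.mp hx.1) k hk
  · rw [partElem_eq]
    refine frontier_iInter_null fun i => ?_
    by_cases hi : i ∈ χ
    · simpa [hi] using (hA i).2
    · simpa [hi, frontier_compl] using (hA i).2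

lemma abs_sub_le_mix {a b : ℝ} (ha : a ∈ Set.Icc (0:ℝ) 1) (hb : b ∈ Set.Icc (0:ℝ) 1) :
    |a - b| ≤ a * (1 - b) + (1 - a) * b := by
  obtain ⟨ha0, ha1⟩ := ha
  obtain ⟨hb0, hb1⟩ := hb
  rw [abs_le]
  constructor <;> nlinarith

lemma measD_le {m : ℕ} (S : SubsetGen m) {Ω : Set (Em m)} (hΩ : JordanMeas Ω) {s t : ℝ}
    (hs0 : 0 ≤ s) (hst : s ≤ t) (ht1 : t ≤ 1) :
    volume (S.Ψ Ω t \ S.Ψ Ω s) = ENNReal.ofReal (t - s) * volume Ω := by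
  have hs1 : s ≤ 1 := hst.trans ht1
  have ht0 : 0 ≤ t := hs0.trans hst
  have hfin : volume (S.Ψ Ω s) ≠ ⊤ := by
    rw [S.meas _ _ hΩ hs0 hs1]
    exact ENNReal.mul_ne_top ENNReal.ofReal_ne_top hΩ.fin
  rw [measure_diff (S.mono _ _ _ hΩ hs0 hst ht1) (S.memJ _ _ hΩ hs0 hs1).2.nullMeas hfin,
    S.meas _ _ hΩ ht0 ht1, S.meas _ _ hΩ hs0 hs1,
    ENNReal.ofReal_sub _ hs0, ENNReal.sub_mul fun _ _ => hΩ.fin]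

lemma measD {m : ℕ} (S : SubsetGen m) {Ω : Set (Em m)} (hΩ : JordanMeas Ω) {s t : ℝ}
    (hs : s ∈ Set.Icc (0:ℝ) 1) (ht : t ∈ Set.Icc (0:ℝ) 1) :
    volume ((S.Ψ Ω s \ S.Ψ Ω t) ∪ (S.Ψ Ω t \ S.Ψ Ω s)) =
      ENNReal.ofReal |s - t| * volume Ω := by
  rcases le_total s t with hst | hts
  · rw [diff_eq_empty.mpr (S.mono _ _ _ hΩ hs.1 hst ht.2), empty_union,
      measD_le S hΩ hs.1 hst ht.2, abs_sub_comm, abs_of_nonneg (by linarith)]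
  · rw [diff_eq_empty.mpr (S.mono _ _ _ hΩ ht.1 hts hs.2), union_empty,
      measD_le S hΩ ht.1 hts hs.2, abs_of_nonneg (by linarith)]

/-- d_μ(⊗ α_i A_i, ⊗ β_i A_i) ≤ ∑_i ∑_j α_i β_j d_μ(A_i, A_j). -/
theorem stmt_9 {m n : ℕ} (S : SubsetGen m) (A : Fin (n+1) → Set (Em m))
    (hA : ∀ i, MemJ (A i)) (α β : Fin (n+1) → ℝ)
    (hα : ∀ i, α i ∈ Set.Icc (0:ℝ) 1) (hβ : ∀ i, β i ∈ Set.Icc (0:ℝ) 1)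
    (hsα : ∑ i, α i = 1) (hsβ : ∑ i, β i = 1) :
    dmu (partAvg S α A) (partAvg S β A) ≤
      ∑ i, ∑ j, α i * β j * dmu (A i) (A j) := by
  classical
  have hAJ : ∀ i, JordanMeas (A i) := fun i => (hA i).2
  set T : Finset (Finset (Fin (n+1))) := Finset.univ.filter (fun χ => χ.Nonempty) with hTdef
  set a : Finset (Fin (n+1)) → ℝ := fun χ => ∑ k ∈ χ, α k with hadef
  set b : Finset (Fin (n+1)) → ℝ := fun χ => ∑ k ∈ χ, β k with hbdef
  have hIcc : ∀ (γ : Fin (n+1) → ℝ), (∀ i, γ i ∈ Set.Icc (0:ℝ) 1) → (∑ i, γ i = 1) →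
      ∀ χ : Finset (Fin (n+1)), (∑ k ∈ χ, γ k) ∈ Set.Icc (0:ℝ) 1 := by
    intro γ hγ hsγ χ
    constructor
    · exact Finset.sum_nonneg fun i _ => (hγ i).1
    · rw [← hsγ]
      exact Finset.sum_le_sum_of_subset_of_nonneg (Finset.subset_univ χ)
        (fun i _ _ => (hγ i).1)
  have haI : ∀ χ, a χ ∈ Set.Icc (0:ℝ) 1 := hIcc α hα hsα
  have hbI : ∀ χ, b χ ∈ Set.Icc (0:ℝ) 1 := hIcc β hβ hsβ
  have hJ : ∀ χ ∈ T, JordanMeas (partElem A χ) := fun χ hχ =>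
    partElem_jordan hAJ (Finset.mem_filter.mp hχ).2
  have hUV : ∀ γ : Fin (n+1) → ℝ,
      partAvg S γ A = ⋃ χ ∈ T, S.Ψ (partElem A χ) (∑ k ∈ χ, γ k) := by
    intro γ
    ext x
    simp [partAvg, hTdef]
  set D : Finset (Fin (n+1)) → Set (Em m) := fun χ =>
    (S.Ψ (partElem A χ) (a χ) \ S.Ψ (partElem A χ) (b χ)) ∪
      (S.Ψ (partElem A χ) (b χ) \ S.Ψ (partElem A χ) (a χ)) with hDdef
  have hsub : (partAvg S α A \ partAvg S β A) ∪ (partAvg S β A \ partAvg S α A) ⊆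
      ⋃ χ ∈ T, D χ := by
    rw [hUV α, hUV β]
    rintro x (⟨h1, h2⟩ | ⟨h1, h2⟩)
    · obtain ⟨χ, hχ, hx⟩ := mem_iUnion₂.mp h1
      exact mem_iUnion₂.mpr ⟨χ, hχ,
        Or.inl ⟨hx, fun hc => h2 (mem_iUnion₂.mpr ⟨χ, hχ, hc⟩)⟩⟩
    · obtain ⟨χ, hχ, hx⟩ := mem_iUnion₂.mp h1
      exact mem_iUnion₂.mpr ⟨χ, hχ,
        Or.inr ⟨hx, fun hc => h2 (mem_iUnion₂.mpr ⟨χ, hχ, hc⟩)⟩⟩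
  -- the per-pair indicator condition
  set E : Fin (n+1) → Fin (n+1) → Finset (Fin (n+1)) → Prop :=
    fun i j χ => (i ∈ χ ∧ j ∉ χ) ∨ (i ∉ χ ∧ j ∈ χ) with hEdef
  have hfiltermem : ∀ χ : Finset (Fin (n+1)),
      Finset.univ.filter (fun i : Fin (n+1) => i ∈ χ) = χ := by
    intro χ; ext i; simp
  have key : ∀ χ : Finset (Fin (n+1)),
      |a χ - b χ| ≤ ∑ i, ∑ j, (if E i j χ then α i * β j else 0) := by
    intro χ
    have hcompl : ∑ j ∈ Finset.univ.filter (fun j : Fin (n+1) => ¬ j ∈ χ), β j = 1 - b χ := by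
      have := Finset.sum_filter_add_sum_filter_not Finset.univ
        (fun j : Fin (n+1) => j ∈ χ) β
      rw [hfiltermem χ] at this
      rw [hsβ] at this
      linarith
    have hinner : ∀ i, (∑ j, if E i j χ then α i * β j else 0) =
        α i * (if i ∈ χ then 1 - b χ else b χ) := by
      intro i
      by_cases hi : i ∈ χ
      · rw [if_pos hi]
        have : ∀ j, (if E i j χ then α i * β j else 0) =
            (if ¬ j ∈ χ then α i * β j else 0) := by
          intro j
          by_cases hj : j ∈ χ <;> simp [hEdef, hi, hj]
        rw [Finset.sum_congr rfl fun j _ => this j, ← Finset.sum_filter, ← Finset.mul_sum,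
          hcompl]
      · rw [if_neg hi]
        have : ∀ j, (if E i j χ then α i * β j else 0) =
            (if j ∈ χ then α i * β j else 0) := by
          intro j
          by_cases hj : j ∈ χ <;> simp [hEdef, hi, hj]
        rw [Finset.sum_congr rfl fun j _ => this j, ← Finset.sum_filter, ← Finset.mul_sum,
          hfiltermem χ]
    have houter : (∑ i, ∑ j, if E i j χ then α i * β j else 0) =
        a χ * (1 - b χ) + (1 - a χ) * b χ := by
      rw [Finset.sum_congr rfl fun i _ => hinner i]
      have hsplit := Finset.sum_filter_add_sum_filter_not Finset.univ
        (fun i : Fin (n+1) => i ∈ χ)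
        (fun i => α i * (if i ∈ χ then 1 - b χ else b χ))
      rw [← hsplit]
      have h1 : ∑ i ∈ Finset.univ.filter (fun i : Fin (n+1) => i ∈ χ),
          α i * (if i ∈ χ then 1 - b χ else b χ) = a χ * (1 - b χ) := by
        rw [Finset.sum_congr rfl (fun i hi => by
          rw [if_pos (Finset.mem_filter.mp hi).2]), ← Finset.sum_mul, hfiltermem χ]
      have h2 : ∑ i ∈ Finset.univ.filter (fun i : Fin (n+1) => ¬ i ∈ χ),
          α i * (if i ∈ χ then 1 - b χ else b χ) = (1 - a χ) * b χ := by
        have hca : ∑ i ∈ Finset.univ.filter (fun i : Fin (n+1) => ¬ i ∈ χ), α i = 1 - a χ := by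
          have := Finset.sum_filter_add_sum_filter_not Finset.univ
            (fun i : Fin (n+1) => i ∈ χ) α
          rw [hfiltermem χ] at this
          rw [hsα] at this
          linarith
        rw [Finset.sum_congr rfl (fun i hi => by
          rw [if_neg (Finset.mem_filter.mp hi).2]), ← Finset.sum_mul, hca]
      rw [h1, h2]
    rw [houter]
    exact abs_sub_le_mix (haI χ) (hbI χ)
  -- the ENNReal bound
  set R : ENNReal := ∑ i, ∑ j, ENNReal.ofReal (α i * β j) *
    volume ((A i \ A j) ∪ (A j \ A i)) with hRdef
  have hchain : volume ((partAvg S α A \ partAvg S β A) ∪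
      (partAvg S β A \ partAvg S α A)) ≤ R := by
    calc volume ((partAvg S α A \ partAvg S β A) ∪ (partAvg S β A \ partAvg S α A))
        ≤ volume (⋃ χ ∈ T, D χ) := measure_mono hsub
      _ ≤ ∑ χ ∈ T, volume (D χ) := measure_biUnion_finset_le T D
      _ = ∑ χ ∈ T, ENNReal.ofReal |a χ - b χ| * volume (partElem A χ) :=
          Finset.sum_congr rfl fun χ hχ => measD S (hJ χ hχ) (haI χ) (hbI χ)
      _ ≤ ∑ χ ∈ T, (∑ i, ∑ j, if E i j χ then ENNReal.ofReal (α i * β j) else 0) *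
            volume (partElem A χ) := by
          refine Finset.sum_le_sum fun χ _ => mul_le_mul_left ?_ _
          calc ENNReal.ofReal |a χ - b χ|
              ≤ ENNReal.ofReal (∑ i, ∑ j, if E i j χ then α i * β j else 0) :=
                ENNReal.ofReal_le_ofReal (key χ)
            _ = ∑ i, ∑ j, (if E i j χ then ENNReal.ofReal (α i * β j) else 0) := by
                have hnn : ∀ i j, (0:ℝ) ≤ if E i j χ then α i * β j else 0 := fun i j => by
                  by_cases h : E i j χ <;> simp [h, mul_nonneg (hα i).1 (hβ j).1]
                rw [ENNReal.ofReal_sum_of_nonneg fun i _ =>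
                  Finset.sum_nonneg fun j _ => hnn i j]
                refine Finset.sum_congr rfl fun i _ => ?_
                rw [ENNReal.ofReal_sum_of_nonneg fun j _ => hnn i j]
                refine Finset.sum_congr rfl fun j _ => ?_
                split <;> simp
      _ = ∑ i, ∑ j, ∑ χ ∈ T,
            (if E i j χ then ENNReal.ofReal (α i * β j) * volume (partElem A χ) else 0) := by
          have hL : ∀ χ, (∑ i, ∑ j, if E i j χ then ENNReal.ofReal (α i * β j) else 0) *
              volume (partElem A χ) =
              ∑ i, ∑ j, (if E i j χ then
                ENNReal.ofReal (α i * β j) * volume (partElem A χ) else 0) := by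
            intro χ
            rw [Finset.sum_mul]
            refine Finset.sum_congr rfl fun i _ => ?_
            rw [Finset.sum_mul]
            refine Finset.sum_congr rfl fun j _ => ?_
            rw [ite_mul, zero_mul]
          exact (Finset.sum_congr rfl fun χ _ => hL χ).trans
            (Finset.sum_comm.trans
              (Finset.sum_congr rfl fun i _ => Finset.sum_comm))
      _ ≤ R := by
          refine Finset.sum_le_sum fun i _ => Finset.sum_le_sum fun j _ => ?_
          rw [← Finset.sum_filter, ← Finset.mul_sum]
          refine mul_le_mul_right ?_ _
          have hdisj : (↑(T.filter (fun χ => E i j χ)) : Set (Finset (Fin (n+1)))).Pairwise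
              (Function.onFun (AEDisjoint volume) fun χ => partElem A χ) := by
            intro χ _ χ' _ hne
            exact (partElem_disjoint A hne).aedisjoint
          rw [← measure_biUnion_finset₀ hdisj fun χ hχ =>
            (hJ χ (Finset.filter_subset _ _ hχ)).nullMeas]
          refine measure_mono (iUnion₂_subset fun χ hχ => ?_)
          rcases (Finset.mem_filter.mp hχ).2 with ⟨h1, h2⟩ | ⟨h1, h2⟩
          · exact (partElem_subset_diff A h1 h2).trans subset_union_left
          · exact (partElem_subset_diff A h2 h1).trans subset_union_right
  -- conversion back to ℝ
  have hΔfin : ∀ i j : Fin (n+1), volume ((A i \ A j) ∪ (A j \ A i)) ≠ ⊤ := by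
    intro i j
    refine (((hAJ i).1.union (hAJ j).1).subset ?_).measure_lt_top.ne
    exact union_subset (diff_subset.trans subset_union_left)
      (diff_subset.trans subset_union_right)
  have htermfin : ∀ i j : Fin (n+1),
      ENNReal.ofReal (α i * β j) * volume ((A i \ A j) ∪ (A j \ A i)) ≠ ⊤ :=
    fun i j => ENNReal.mul_ne_top ENNReal.ofReal_ne_top (hΔfin i j)
  have hRfin : R ≠ ⊤ := by
    rw [hRdef]
    refine (ENNReal.sum_lt_top.mpr fun i _ => ENNReal.sum_lt_top.mpr fun j _ => ?_).ne
    exact (htermfin i j).lt_top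
  have hfinal : dmu (partAvg S α A) (partAvg S β A) ≤ R.toReal := by
    rw [dmu]
    exact ENNReal.toReal_mono hRfin hchain
  refine hfinal.trans_eq ?_
  rw [hRdef, ENNReal.toReal_sum fun i _ =>
    (ENNReal.sum_lt_top.mpr fun j _ => (htermfin i j).lt_top).ne]
  refine Finset.sum_congr rfl fun i _ => ?_
  rw [ENNReal.toReal_sum fun j _ => htermfin i j]
  refine Finset.sum_congr rfl fun j _ => ?_
  rw [ENNReal.toReal_mul, ENNReal.toReal_ofReal (mul_nonneg (hα i).1 (hβ j).1), dmu]
end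
end

section
/- Let Ψ be a subset-generating function, let A_0,…,A_n ∈ 𝔍 and let α_0,…,α_n ∈ [0,1] with ∑_{i=0}^n α_i = 1. Then for every j ∈ {0,…,n}, the distance from A_j to the partition average equals the weighted average of the distances: d_μ(A_j, ⊗_{i=0}^n α_i A_i) = ∑_{i=0}^n α_i · d_μ(A_j, A_i). -/
open MeasureTheory Set

noncomputable section

namespace StmtTenAux

variable {m n : ℕ}

lemma jm_null {A : Set (Em m)} (h : JordanMeas A) : NullMeasurableSet A volume := by
  have h2 : volume (A \ interior A) = 0 :=
    measure_mono_null (fun x hx =>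
      (⟨subset_closure hx.1, hx.2⟩ : x ∈ closure A \ interior A)) h.2
  have hA : A = interior A ∪ (A \ interior A) := (Set.union_diff_cancel interior_subset).symm
  rw [hA]
  exact isOpen_interior.measurableSet.nullMeasurableSet.union (NullMeasurableSet.of_null h2)

lemma jm_fin {A : Set (Em m)} (h : JordanMeas A) : volume A ≠ ⊤ :=
  h.1.measure_lt_top.ne

def idx (A : Fin (n+1) → Set (Em m)) (x : Em m) : Finset (Fin (n+1)) :=
  @Finset.filter _ (fun k => x ∈ A k) (Classical.decPred _) Finset.univ

lemma mem_idx {A : Fin (n+1) → Set (Em m)} {x : Em m} {k : Fin (n+1)} :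
    k ∈ idx A x ↔ x ∈ A k := by
  simp [idx]

lemma mem_partElem {A : Fin (n+1) → Set (Em m)} {χ : Finset (Fin (n+1))} {x : Em m} :
    x ∈ partElem A χ ↔ idx A x = χ := by
  simp only [partElem, Set.mem_diff, Set.mem_iInter, Set.mem_iUnion, not_exists,
    Finset.mem_compl, Finset.ext_iff, mem_idx]
  constructor
  · rintro ⟨h1, h2⟩ k
    exact ⟨fun hk => by_contra fun hkχ => h2 k hkχ hk, fun hk => h1 k hk⟩
  · intro h
    exact ⟨fun k hk => (h k).2 hk, fun l hl hxl => hl ((h l).1 hxl)⟩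

lemma partElem_disj {A : Fin (n+1) → Set (Em m)} {χ χ' : Finset (Fin (n+1))}
    (h : χ ≠ χ') : Disjoint (partElem A χ) (partElem A χ') := by
  rw [Set.disjoint_left]
  intro x hx hx'
  exact h ((mem_partElem.mp hx).symm.trans (mem_partElem.mp hx'))

lemma partElem_subset {A : Fin (n+1) → Set (Em m)} {χ : Finset (Fin (n+1))}
    {k : Fin (n+1)} (hk : k ∈ χ) : partElem A χ ⊆ A k :=
  fun _ hx => mem_idx.mp ((mem_partElem.mp hx) ▸ hk)

lemma partElem_not_mem {A : Fin (n+1) → Set (Em m)} {χ : Finset (Fin (n+1))}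
    {k : Fin (n+1)} (hk : k ∉ χ) {x : Em m} (hx : x ∈ partElem A χ) : x ∉ A k :=
  fun hxk => hk ((mem_partElem.mp hx) ▸ mem_idx.mpr hxk)

lemma frontier_biInter_subset (A : Fin (n+1) → Set (Em m)) (t : Finset (Fin (n+1))) :
    frontier (⋂ k ∈ t, A k) ⊆ ⋃ k, frontier (A k) := by
  classical
  induction t using Finset.induction_on with
  | empty => simp
  | insert _ _ ha ih =>
    rw [Finset.set_biInter_insert]
    refine (frontier_inter_subset _ _).trans ?_
    rintro x (⟨h1, -⟩ | ⟨-, h2⟩)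
    · exact Set.mem_iUnion.mpr ⟨_, h1⟩
    · exact ih h2

lemma frontier_biUnion_subset (A : Fin (n+1) → Set (Em m)) (t : Finset (Fin (n+1))) :
    frontier (⋃ k ∈ t, A k) ⊆ ⋃ k, frontier (A k) := by
  classical
  induction t using Finset.induction_on with
  | empty => simp
  | insert _ _ ha ih =>
    rw [Finset.set_biUnion_insert]
    refine (frontier_union_subset _ _).trans ?_
    rintro x (⟨h1, -⟩ | ⟨-, h2⟩)
    · exact Set.mem_iUnion.mpr ⟨_, h1⟩
    · exact ih h2

lemma partElem_frontier_null {A : Fin (n+1) → Set (Em m)}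
    (hA : ∀ i, JordanMeas (A i)) (χ : Finset (Fin (n+1))) :
    volume (frontier (partElem A χ)) = 0 := by
  have hsub : frontier (partElem A χ) ⊆ ⋃ k, frontier (A k) := by
    rw [partElem, Set.diff_eq]
    refine (frontier_inter_subset _ _).trans ?_
    rintro x (⟨h1, -⟩ | ⟨-, h2⟩)
    · exact frontier_biInter_subset A χ h1
    · rw [frontier_compl] at h2
      exact frontier_biUnion_subset A χᶜ h2
  exact measure_mono_null hsub (measure_iUnion_null fun k => (hA k).2)

lemma partElem_jm {A : Fin (n+1) → Set (Em m)}
    (hA : ∀ i, JordanMeas (A i)) {χ : Finset (Fin (n+1))} (hχ : χ.Nonempty) :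
    JordanMeas (partElem A χ) := by
  obtain ⟨k, hk⟩ := hχ
  exact ⟨(hA k).1.subset (partElem_subset hk), partElem_frontier_null hA χ⟩

lemma algebra_step (α : Fin (n+1) → ℝ) (hsum : ∑ i, α i = 1) (j : Fin (n+1))
    (w : Finset (Fin (n+1)) → ℝ) :
    ∑ χ ∈ Finset.univ.filter (fun χ : Finset (Fin (n+1)) => j ∈ χ), (1 - ∑ k ∈ χ, α k) * w χ
      + ∑ χ ∈ Finset.univ.filter (fun χ : Finset (Fin (n+1)) => χ.Nonempty ∧ j ∉ χ),
          (∑ k ∈ χ, α k) * w χ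
    = ∑ i, α i * ((∑ χ ∈ Finset.univ.filter (fun χ : Finset (Fin (n+1)) => j ∈ χ ∧ i ∉ χ), w χ)
      + ∑ χ ∈ Finset.univ.filter (fun χ : Finset (Fin (n+1)) => i ∈ χ ∧ j ∉ χ), w χ) := by
  classical
  have hone : ∀ χ : Finset (Fin (n+1)), 1 - ∑ k ∈ χ, α k = ∑ k ∈ χᶜ, α k := by
    intro χ
    rw [← hsum, ← Finset.sum_add_sum_compl χ α]
    ring
  calc
    _ = ∑ χ : Finset (Fin (n+1)), ∑ i,
          ((if j ∈ χ ∧ i ∉ χ then α i * w χ else 0)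
           + (if i ∈ χ ∧ j ∉ χ then α i * w χ else 0)) := by
        rw [Finset.sum_filter, Finset.sum_filter, ← Finset.sum_add_distrib]
        refine Finset.sum_congr rfl fun χ _ => ?_
        rw [Finset.sum_add_distrib]
        congr 1
        · by_cases hj : j ∈ χ
          · simp only [hj, if_true, hone, not_true, and_false, false_and, and_true]
            rw [Finset.sum_mul]
            rw [show χᶜ = Finset.univ.filter (fun k => k ∉ χ) from by ext k; simp,
              Finset.sum_filter]
            refine Finset.sum_congr rfl fun i _ => ?_
            by_cases hi : i ∈ χ <;> simp [hi]
          · simp only [hj, if_false, not_false_iff, and_true, false_and]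
            simp
        · by_cases hj : j ∈ χ
          · simp [hj]
          · by_cases hne : χ.Nonempty
            · simp only [hne, hj, not_false_iff, and_true, if_true, true_and]
              rw [Finset.sum_mul,
                show χ = Finset.univ.filter (fun k => k ∈ χ) from by ext k; simp,
                Finset.sum_filter]
              simp
            · rw [Finset.not_nonempty_iff_eq_empty] at hne
              subst hne
              simp
    _ = _ := by
        rw [Finset.sum_comm]
        refine Finset.sum_congr rfl fun i _ => ?_
        rw [Finset.sum_add_distrib, mul_add]
        congr 1 <;>
        · rw [Finset.sum_filter, Finset.mul_sum]
          refine Finset.sum_congr rfl fun χ _ => ?_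
          split <;> simp [mul_comm]

end StmtTenAux

open StmtTenAux in
/-- d_μ(A_j, ⊗_{i=0}^n α_i A_i) = ∑_{i=0}^n α_i · d_μ(A_j, A_i). -/
theorem stmt_10 {m n : ℕ} (S : SubsetGen m) (A : Fin (n+1) → Set (Em m))
    (hA : ∀ i, MemJ (A i)) (α : Fin (n+1) → ℝ)
    (hα : ∀ i, α i ∈ Set.Icc (0:ℝ) 1) (hsum : ∑ i, α i = 1) (j : Fin (n+1)) :
    dmu (A j) (partAvg S α A) = ∑ i, α i * dmu (A j) (A i) := by
  classical
  have hJ : ∀ i, JordanMeas (A i) := fun i => (hA i).2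
  set sα : Finset (Fin (n+1)) → ℝ := fun χ => ∑ k ∈ χ, α k with hsα
  set Ψ' : Finset (Fin (n+1)) → Set (Em m) := fun χ => S.Ψ (partElem A χ) (sα χ) with hΨ'
  set P := partAvg S α A with hPd
  have hs0 : ∀ χ, 0 ≤ sα χ := fun χ => Finset.sum_nonneg fun i _ => (hα i).1
  have hs1 : ∀ χ, sα χ ≤ 1 := fun χ => by
    rw [hsα]
    simp only
    rw [← hsum]
    exact Finset.sum_le_sum_of_subset_of_nonneg (Finset.subset_univ χ) fun i _ _ => (hα i).1
  have hΩjm : ∀ χ : Finset (Fin (n+1)), χ.Nonempty → JordanMeas (partElem A χ) :=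
    fun χ h => partElem_jm hJ h
  have hΨsub : ∀ χ, χ.Nonempty → Ψ' χ ⊆ partElem A χ :=
    fun χ h => S.subset _ _ (hΩjm χ h) (hs0 χ) (hs1 χ)
  have hΨjm : ∀ χ, χ.Nonempty → JordanMeas (Ψ' χ) :=
    fun χ h => (S.memJ _ _ (hΩjm χ h) (hs0 χ) (hs1 χ)).2
  have hΨvol : ∀ χ, χ.Nonempty →
      volume (Ψ' χ) = ENNReal.ofReal (sα χ) * volume (partElem A χ) :=
    fun χ h => S.meas _ _ (hΩjm χ h) (hs0 χ) (hs1 χ)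
  have hmemP : ∀ x, x ∈ P ↔ ∃ χ : Finset (Fin (n+1)), χ.Nonempty ∧ x ∈ Ψ' χ := by
    intro x
    simp only [hPd, partAvg, Set.mem_iUnion, Set.mem_setOf_eq, exists_prop, hΨ', hsα]
  have hΨP : ∀ χ : Finset (Fin (n+1)), χ.Nonempty → Ψ' χ ⊆ P := by
    intro χ h x hx
    exact (hmemP x).mpr ⟨χ, h, hx⟩
  have hPcap : ∀ (χ : Finset (Fin (n+1))) (x : Em m), x ∈ P → x ∈ partElem A χ → x ∈ Ψ' χ := by
    intro χ x hxP hxΩ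
    obtain ⟨χ', hne', hxΨ⟩ := (hmemP x).mp hxP
    have hxΩ' := hΨsub χ' hne' hxΨ
    have hcc : χ' = χ := (mem_partElem.mp hxΩ').symm.trans (mem_partElem.mp hxΩ)
    exact hcc ▸ hxΨ
  set sJ : Finset (Finset (Fin (n+1))) := Finset.univ.filter (fun χ => j ∈ χ) with hsJ
  set sK : Finset (Finset (Fin (n+1))) :=
    Finset.univ.filter (fun χ => χ.Nonempty ∧ j ∉ χ) with hsK
  have hAjP : A j \ P = ⋃ χ ∈ sJ, (partElem A χ \ Ψ' χ) := by
    ext x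
    simp only [Set.mem_diff, Set.mem_iUnion, hsJ, Finset.mem_filter, Finset.mem_univ, true_and,
      exists_prop]
    constructor
    · rintro ⟨hx, hxP⟩
      refine ⟨idx A x, mem_idx.mpr hx, mem_partElem.mpr rfl, fun hΨx => hxP ?_⟩
      exact hΨP _ ⟨j, mem_idx.mpr hx⟩ hΨx
    · rintro ⟨χ, hjχ, hxΩ, hxΨ⟩
      exact ⟨partElem_subset hjχ hxΩ, fun hxP => hxΨ (hPcap χ x hxP hxΩ)⟩
  have hPAj : P \ A j = ⋃ χ ∈ sK, Ψ' χ := by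
    ext x
    simp only [Set.mem_diff, Set.mem_iUnion, hsK, Finset.mem_filter, Finset.mem_univ, true_and,
      exists_prop]
    constructor
    · rintro ⟨hxP, hxA⟩
      obtain ⟨χ, hne, hxΨ⟩ := (hmemP x).mp hxP
      exact ⟨χ, ⟨hne, fun hj2 => hxA (partElem_subset hj2 (hΨsub χ hne hxΨ))⟩, hxΨ⟩
    · rintro ⟨χ, ⟨hne, hjχ⟩, hxΨ⟩
      exact ⟨hΨP χ hne hxΨ, partElem_not_mem hjχ (hΨsub χ hne hxΨ)⟩
  have hdiff : ∀ a b : Fin (n+1), A a \ A b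
      = ⋃ χ ∈ Finset.univ.filter (fun χ : Finset (Fin (n+1)) => a ∈ χ ∧ b ∉ χ), partElem A χ := by
    intro a b
    ext x
    simp only [Set.mem_diff, Set.mem_iUnion, Finset.mem_filter, Finset.mem_univ, true_and,
      exists_prop]
    constructor
    · rintro ⟨hxa, hxb⟩
      exact ⟨idx A x, ⟨mem_idx.mpr hxa, fun h => hxb (mem_idx.mp h)⟩, mem_partElem.mpr rfl⟩
    · rintro ⟨χ, ⟨ha, hb⟩, hx⟩
      exact ⟨partElem_subset ha hx, partElem_not_mem hb hx⟩
  have hμUnion : ∀ (F : Finset (Finset (Fin (n+1)))) (g : Finset (Fin (n+1)) → Set (Em m)),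
      (∀ χ ∈ F, g χ ⊆ partElem A χ) → (∀ χ ∈ F, NullMeasurableSet (g χ) volume) →
      volume (⋃ χ ∈ F, g χ) = ∑ χ ∈ F, volume (g χ) := by
    intro F g hsub hmeas
    refine measure_biUnion_finset₀ ?_ hmeas
    intro χ hχ χ' hχ' hne
    exact ((partElem_disj hne).mono (hsub χ hχ) (hsub χ' hχ')).aedisjoint
  have hterm2 : ∀ χ : Finset (Fin (n+1)), χ.Nonempty →
      (volume (Ψ' χ)).toReal = sα χ * (volume (partElem A χ)).toReal := by
    intro χ hne
    rw [hΨvol χ hne, ENNReal.toReal_mul, ENNReal.toReal_ofReal (hs0 χ)]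
  have hterm1 : ∀ χ : Finset (Fin (n+1)), χ.Nonempty →
      (volume (partElem A χ \ Ψ' χ)).toReal
        = (1 - sα χ) * (volume (partElem A χ)).toReal := by
    intro χ hne
    have hle : volume (Ψ' χ) ≤ volume (partElem A χ) := measure_mono (hΨsub χ hne)
    rw [measure_diff (hΨsub χ hne) (jm_null (hΨjm χ hne)) (jm_fin (hΨjm χ hne)),
      ENNReal.toReal_sub_of_le hle (jm_fin (hΩjm χ hne)), hterm2 χ hne]
    ring
  have hdisjJK : Disjoint sJ sK := by
    rw [Finset.disjoint_left]
    intro χ h1 h2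
    rw [hsJ, Finset.mem_filter] at h1
    rw [hsK, Finset.mem_filter] at h2
    exact h2.2.2 h1.2
  have hne' : ∀ χ ∈ sJ ∪ sK, χ.Nonempty := by
    intro χ hχ
    rcases Finset.mem_union.mp hχ with h | h
    · rw [hsJ, Finset.mem_filter] at h; exact ⟨j, h.2⟩
    · rw [hsK, Finset.mem_filter] at h; exact h.2.1
  have hgsub : ∀ χ ∈ sJ ∪ sK,
      (if j ∈ χ then partElem A χ \ Ψ' χ else Ψ' χ) ⊆ partElem A χ := by
    intro χ hχ
    by_cases hj2 : j ∈ χ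
    · rw [if_pos hj2]; exact Set.diff_subset
    · rw [if_neg hj2]; exact hΨsub χ (hne' χ hχ)
  have hgmeas : ∀ χ ∈ sJ ∪ sK,
      NullMeasurableSet (if j ∈ χ then partElem A χ \ Ψ' χ else Ψ' χ) volume := by
    intro χ hχ
    have hne2 := hne' χ hχ
    by_cases hj2 : j ∈ χ
    · rw [if_pos hj2]
      exact (jm_null (hΩjm χ hne2)).diff (jm_null (hΨjm χ hne2))
    · rw [if_neg hj2]; exact jm_null (hΨjm χ hne2)
  have hgfin : ∀ χ ∈ sJ ∪ sK,
      volume (if j ∈ χ then partElem A χ \ Ψ' χ else Ψ' χ) ≠ ⊤ := by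
    intro χ hχ
    exact ne_top_of_le_ne_top (jm_fin (hΩjm χ (hne' χ hχ))) (measure_mono (hgsub χ hχ))
  have hunion : (A j \ P) ∪ (P \ A j)
      = ⋃ χ ∈ sJ ∪ sK, (if j ∈ χ then partElem A χ \ Ψ' χ else Ψ' χ) := by
    rw [hAjP, hPAj, Finset.set_biUnion_union]
    congr 1
    · refine Set.iUnion₂_congr fun χ hχ => ?_
      rw [hsJ, Finset.mem_filter] at hχ
      rw [if_pos hχ.2]
    · refine Set.iUnion₂_congr fun χ hχ => ?_
      rw [hsK, Finset.mem_filter] at hχ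
      rw [if_neg hχ.2.2]
  have hLHS : dmu (A j) P
      = ∑ χ ∈ sJ, (1 - sα χ) * (volume (partElem A χ)).toReal
        + ∑ χ ∈ sK, sα χ * (volume (partElem A χ)).toReal := by
    rw [dmu, hunion, hμUnion _ _ hgsub hgmeas, ENNReal.toReal_sum hgfin,
      Finset.sum_union hdisjJK]
    congr 1
    · refine Finset.sum_congr rfl fun χ hχ => ?_
      rw [hsJ, Finset.mem_filter] at hχ
      rw [if_pos hχ.2]
      exact hterm1 χ ⟨j, hχ.2⟩
    · refine Finset.sum_congr rfl fun χ hχ => ?_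
      rw [hsK, Finset.mem_filter] at hχ
      rw [if_neg hχ.2.2]
      exact hterm2 χ hχ.2.1
  have hRHS : ∀ i, dmu (A j) (A i)
      = (∑ χ ∈ Finset.univ.filter (fun χ : Finset (Fin (n+1)) => j ∈ χ ∧ i ∉ χ),
          (volume (partElem A χ)).toReal)
        + ∑ χ ∈ Finset.univ.filter (fun χ : Finset (Fin (n+1)) => i ∈ χ ∧ j ∉ χ),
          (volume (partElem A χ)).toReal := by
    intro i
    have hd12 : Disjoint (Finset.univ.filter (fun χ : Finset (Fin (n+1)) => j ∈ χ ∧ i ∉ χ))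
        (Finset.univ.filter (fun χ : Finset (Fin (n+1)) => i ∈ χ ∧ j ∉ χ)) := by
      rw [Finset.disjoint_left]
      intro χ h1 h2
      rw [Finset.mem_filter] at h1 h2
      exact h2.2.2 h1.2.1
    have hneF : ∀ χ ∈ (Finset.univ.filter (fun χ : Finset (Fin (n+1)) => j ∈ χ ∧ i ∉ χ))
        ∪ (Finset.univ.filter (fun χ : Finset (Fin (n+1)) => i ∈ χ ∧ j ∉ χ)), χ.Nonempty := by
      intro χ hχ
      rcases Finset.mem_union.mp hχ with h | h
      · rw [Finset.mem_filter] at h; exact ⟨j, h.2.1⟩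
      · rw [Finset.mem_filter] at h; exact ⟨i, h.2.1⟩
    have hU : (A j \ A i) ∪ (A i \ A j)
        = ⋃ χ ∈ (Finset.univ.filter (fun χ : Finset (Fin (n+1)) => j ∈ χ ∧ i ∉ χ))
            ∪ (Finset.univ.filter (fun χ : Finset (Fin (n+1)) => i ∈ χ ∧ j ∉ χ)),
          partElem A χ := by
      rw [hdiff j i, hdiff i j, Finset.set_biUnion_union]
    rw [dmu, hU, hμUnion _ _ (fun χ _ => subset_rfl)
        (fun χ hχ => jm_null (hΩjm χ (hneF χ hχ))),
      ENNReal.toReal_sum (fun χ hχ => jm_fin (hΩjm χ (hneF χ hχ))),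
      Finset.sum_union hd12]
  rw [hLHS]
  simp only [hsJ, hsK, hsα]
  rw [algebra_step α hsum j (fun χ => (volume (partElem A χ)).toReal)]
  refine Finset.sum_congr rfl fun i _ => ?_
  rw [hRHS i]
end
end

section
/- (Kac) Let L > 0, 0 < ν ≤ 1, and let f : [0,1] → ℝ satisfy |f(x) − f(y)| ≤ L·|x−y|^ν for all x, y ∈ [0,1]. Then for every n ≥ 1 and every x ∈ [0,1], the Bernstein polynomial B_n(f,x) = ∑_{i=0}^n b(n,x;i)·f(i/n) satisfies |f(x) − B_n(f,x)| ≤ L·(x(1−x)/n)^{ν/2}. -/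
open MeasureTheory Set

noncomputable section

/-- Kac: for f ∈ Lip(L,ν) on [0,1],
|f(x) − B_n(f,x)| ≤ L (x(1−x)/n)^{ν/2}. -/
theorem stmt_19 (L ν : ℝ) (hL : 0 < L) (hν0 : 0 < ν) (hν1 : ν ≤ 1)
    (f : ℝ → ℝ)
    (hf : ∀ x ∈ Set.Icc (0:ℝ) 1, ∀ y ∈ Set.Icc (0:ℝ) 1,
      |f x - f y| ≤ L * |x - y| ^ ν)
    (n : ℕ) (hn : 1 ≤ n) (x : ℝ) (hx : x ∈ Set.Icc (0:ℝ) 1) :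
    |f x - ∑ i ∈ Finset.range (n+1), bern n i x * f ((i : ℝ) / n)| ≤
      L * (x * (1 - x) / (n : ℝ)) ^ (ν / 2) := by
  have hnpos : 0 < (n : ℝ) := by exact_mod_cast hn
  set xI : unitInterval := ⟨x, hx⟩ with hxI
  have hbe : ∀ i : ℕ, bern n i x = bernstein n i xI := by
    intro i; simp [bern, bern, bernstein_apply, hxI]
  -- nonnegativity of weights
  have hbnn : ∀ i : ℕ, 0 ≤ bern n i x := by
    intro i; rw [hbe]; exact bernstein_nonneg
  -- sum of weights = 1
  have hsum : ∑ i ∈ Finset.range (n+1), bern n i x = 1 := by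
    have h : ∑ i ∈ Finset.range (n+1), (bernstein n i) xI = 1 := by
      rw [Finset.sum_range]; exact bernstein.probability n xI
    simpa [hbe] using h
  -- variance identity
  have hvar : ∑ i ∈ Finset.range (n+1), bern n i x * (x - (i:ℝ)/n)^2
      = x * (1 - x) / n := by
    have key : ∑ i ∈ Finset.range (n+1), (x - (i:ℝ)/n)^2 * (bernstein n i) xI
        = x * (1 - x) / n := by
      rw [Finset.sum_range]
      have h := bernstein.variance (n := n) (by omega) xI
      simpa [bernstein.z] using h
    rw [← key]
    apply Finset.sum_congr rfl
    intro i _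
    rw [hbe, mul_comm]
  -- step 1: bound by weighted sum of |f x - f (i/n)|
  have h1 : |f x - ∑ i ∈ Finset.range (n+1), bern n i x * f ((i : ℝ) / n)|
      ≤ ∑ i ∈ Finset.range (n+1), bern n i x * (L * |x - (i:ℝ)/n| ^ ν) := by
    have : f x - ∑ i ∈ Finset.range (n+1), bern n i x * f ((i : ℝ) / n)
        = ∑ i ∈ Finset.range (n+1), bern n i x * (f x - f ((i:ℝ)/n)) := by
      rw [Finset.sum_congr rfl (fun i _ => mul_sub (bern n i x) (f x) (f ((i:ℝ)/n))),
        Finset.sum_sub_distrib, ← Finset.sum_mul, hsum, one_mul]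
    rw [this]
    refine (Finset.abs_sum_le_sum_abs _ _).trans ?_
    apply Finset.sum_le_sum
    intro i hi
    rw [abs_mul, abs_of_nonneg (hbnn i)]
    apply mul_le_mul_of_nonneg_left _ (hbnn i)
    have hin : (i:ℝ)/n ∈ Set.Icc (0:ℝ) 1 := by
      constructor
      · positivity
      · rw [div_le_one hnpos]
        exact_mod_cast Nat.lt_succ_iff.mp (Finset.mem_range.mp hi)
    exact hf x hx _ hin
  -- step 2: Jensen (concavity of t^(ν/2))
  have hp : (1:ℝ) ≤ 2 / ν := by
    rw [le_div_iff₀ hν0]; linarith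
  have hνne : ν ≠ 0 := ne_of_gt hν0
  have h2 : ∑ i ∈ Finset.range (n+1), bern n i x * |x - (i:ℝ)/n| ^ ν
      ≤ (x * (1 - x) / n) ^ (ν / 2) := by
    have := Real.arith_mean_le_rpow_mean (Finset.range (n+1))
      (fun i => bern n i x) (fun i => |x - (i:ℝ)/n| ^ ν)
      (fun i _ => hbnn i) hsum
      (fun i _ => Real.rpow_nonneg (abs_nonneg _) ν) hp
    have hz : ∀ i : ℕ, (|x - (i:ℝ)/n| ^ ν) ^ (2/ν) = (x - (i:ℝ)/n)^2 := by
      intro i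
      rw [← Real.rpow_mul (abs_nonneg _), mul_div_cancel₀ _ hνne,
        show ((2:ℝ)) = ((2:ℕ):ℝ) by norm_num, Real.rpow_natCast, sq_abs]
    simp only [hz] at this
    rw [hvar, one_div_div] at this
    exact this
  calc |f x - ∑ i ∈ Finset.range (n+1), bern n i x * f ((i : ℝ) / n)|
      ≤ ∑ i ∈ Finset.range (n+1), bern n i x * (L * |x - (i:ℝ)/n| ^ ν) := h1
    _ = L * ∑ i ∈ Finset.range (n+1), bern n i x * |x - (i:ℝ)/n| ^ ν := by
        rw [Finset.mul_sum]; apply Finset.sum_congr rfl; intro i _; ring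
    _ ≤ L * (x * (1 - x) / n) ^ (ν / 2) := by
        exact mul_le_mul_of_nonneg_left h2 hL.le
end
end
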